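/- Let u_1, …, u_n ∈ ℤ^k and H_i(x) := ⟨u_i, x⟩. Let x ∈ ℝ^k and let y lie in the topological closure of the stratum of x (the stratum of x being the set of z with ⌈H_i(z)⌉ = ⌈H_i(x)⌉ and H_i(z) ∈ ℤ iff H_i(x) ∈ ℤ, for all i). Then for every i, the difference ⌈H_i(x)⌉ − ⌈H_i(y)⌉ is either 0 or 1. -/
import Mathlib


/-- If `y` lies in the topological closure of the stratum of `x`, then for every `i` the
difference `⌈H_i(x)⌉ − ⌈H_i(y)⌉` is either `0` or `1`. -/
theorem ceiling_difference_closure (n k : ℕ) (u : Fin n → Fin k → ℤ) (x y : Fin k → ℝ)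
    (hy : y ∈ closure {z : Fin k → ℝ | ∀ i,
      ⌈∑ j, (u i j : ℝ) * z j⌉ = ⌈∑ j, (u i j : ℝ) * x j⌉ ∧
      ((∃ m : ℤ, (∑ j, (u i j : ℝ) * z j) = (m : ℝ)) ↔
        (∃ m : ℤ, (∑ j, (u i j : ℝ) * x j) = (m : ℝ)))}) :
    ∀ i, ⌈∑ j, (u i j : ℝ) * x j⌉ - ⌈∑ j, (u i j : ℝ) * y j⌉ = 0 ∨
      ⌈∑ j, (u i j : ℝ) * x j⌉ - ⌈∑ j, (u i j : ℝ) * y j⌉ = 1 := by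
  intro i
  set c : ℤ := ⌈∑ j, (u i j : ℝ) * x j⌉ with hc
  set f : (Fin k → ℝ) → ℝ := fun z => ∑ j, (u i j : ℝ) * z j with hf
  have hcont : Continuous f := by
    apply continuous_finset_sum
    intro j _
    exact continuous_const.mul (continuous_apply j)
  have hClosed : IsClosed (f ⁻¹' Set.Icc ((c : ℝ) - 1) (c : ℝ)) :=
    isClosed_Icc.preimage hcont
  have hsub : {z : Fin k → ℝ | ∀ i,
      ⌈∑ j, (u i j : ℝ) * z j⌉ = ⌈∑ j, (u i j : ℝ) * x j⌉ ∧
      ((∃ m : ℤ, (∑ j, (u i j : ℝ) * z j) = (m : ℝ)) ↔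
        (∃ m : ℤ, (∑ j, (u i j : ℝ) * x j) = (m : ℝ)))} ⊆
      f ⁻¹' Set.Icc ((c : ℝ) - 1) (c : ℝ) := by
    intro z hz
    have h1 : ⌈f z⌉ = c := (hz i).1
    refine ⟨?_, ?_⟩
    · by_contra h
      push_neg at h
      have hle' : f z ≤ ((c - 1 : ℤ) : ℝ) := by push_cast; linarith
      have hc' : ⌈f z⌉ ≤ c - 1 := Int.ceil_le.mpr hle'
      omega
    · calc f z ≤ (⌈f z⌉ : ℝ) := Int.le_ceil _
        _ = (c : ℝ) := by rw [h1]
  have hmem := closure_minimal hsub hClosed hy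
  have h1 : (c : ℝ) - 1 ≤ f y := hmem.1
  have h2 : f y ≤ (c : ℝ) := hmem.2
  have hle : ⌈f y⌉ ≤ c := Int.ceil_le.mpr h2
  have hge : c - 1 ≤ ⌈f y⌉ := by
    have h3 : ((c - 1 : ℤ) : ℝ) ≤ (⌈f y⌉ : ℝ) := by
      push_cast
      linarith [Int.le_ceil (f y)]
    exact_mod_cast h3
  have hfy : ⌈∑ j, (u i j : ℝ) * y j⌉ = ⌈f y⌉ := rfl
  omega
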